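/- If N is a sound deterministic negotiation and s is an atom of N that synchronizes at least one loop of N, then the s-negotiation N_s is a sound deterministic negotiation. -/

import Mathlib

universe u v w x

/-- A negotiation over agents `A`, atom names `ν`, outcome names `ρ`, and
internal state spaces `Q a` for each agent `a`. -/
structure Negotiation (A : Type u) (ν : Type v) (ρ : Type w) (Q : A → Type x) where
  atoms : Finset ν
  init : ν
  final : ν
  parties : ν → Finset A
  outs : ν → Finset ρ
  trans : ν → A → ρ → Finset ν
  delta : ν → ρ → (∀ a, Q a) → (∀ a, Q a) → Prop
  init_mem : init ∈ atoms
  final_mem : final ∈ atoms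
  parties_nonempty : ∀ n ∈ atoms, (parties n).Nonempty
  outs_nonempty : ∀ n ∈ atoms, (outs n).Nonempty
  init_all : ∀ a, a ∈ parties init
  final_all : ∀ a, a ∈ parties final
  trans_sub : ∀ n ∈ atoms, ∀ a ∈ parties n, ∀ r ∈ outs n, trans n a r ⊆ atoms
  trans_empty_iff : ∀ n ∈ atoms, ∀ a ∈ parties n, ∀ r ∈ outs n, (trans n a r = ∅ ↔ n = final)
  delta_total : ∀ n ∈ atoms, ∀ r ∈ outs n, ∀ q, ∃ q', delta n r q q'
  delta_frame : ∀ n ∈ atoms, ∀ r ∈ outs n, ∀ q q', delta n r q q' → ∀ a ∉ parties n, q' a = q a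

namespace Negotiation

variable {A : Type u} {ν : Type v} {ρ : Type w} {Q : A → Type x}
variable [DecidableEq A]

/-- The initial marking. -/
def initM (N : Negotiation A ν ρ Q) : A → Finset ν := fun _ => {N.init}

/-- The final marking. -/
def finalM (_N : Negotiation A ν ρ Q) : A → Finset ν := fun _ => ∅

/-- A marking enables an atom if every party is ready to engage in it. -/
def Enables (N : Negotiation A ν ρ Q) (x : A → Finset ν) (n : ν) : Prop :=
  n ∈ N.atoms ∧ ∀ a ∈ N.parties n, n ∈ x a

/-- The small step `x →(n,r) x'`. -/
def Step (N : Negotiation A ν ρ Q) (x : A → Finset ν) (n : ν) (r : ρ)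
    (x' : A → Finset ν) : Prop :=
  N.Enables x n ∧ r ∈ N.outs n ∧
    ∀ a, x' a = if a ∈ N.parties n then N.trans n a r else x a

/-- Occurrence sequences: `Occ N x σ x'` means `x →σ x'`. -/
inductive Occ (N : Negotiation A ν ρ Q) : (A → Finset ν) → List (ν × ρ) → (A → Finset ν) → Prop
  | nil (x : A → Finset ν) : Occ N x [] x
  | cons {x : A → Finset ν} {n : ν} {r : ρ} {x' : A → Finset ν} {l : List (ν × ρ)}
      {x'' : A → Finset ν} :
      N.Step x n r x' → Occ N x' l x'' → Occ N x ((n, r) :: l) x''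

/-- A marking is reachable if some occurrence sequence leads to it from the initial marking. -/
def Reachable (N : Negotiation A ν ρ Q) (x : A → Finset ν) : Prop :=
  ∃ σ, Occ N N.initM σ x

/-- Soundness: every atom can become enabled, and every initial occurrence sequence can be
extended to a large step. -/
def Sound (N : Negotiation A ν ρ Q) : Prop :=
  (∀ n ∈ N.atoms, ∃ x, N.Reachable x ∧ N.Enables x n) ∧
  (∀ σ x, Occ N N.initM σ x → ∃ τ, Occ N x τ N.finalM)

/-- The edge relation of the graph of a negotiation. -/
def Edge (N : Negotiation A ν ρ Q) (n n' : ν) : Prop :=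
  n ∈ N.atoms ∧ ∃ a ∈ N.parties n, ∃ r ∈ N.outs n, n' ∈ N.trans n a r

/-- A negotiation is cyclic if its graph has a cycle. -/
def Cyclic (N : Negotiation A ν ρ Q) : Prop :=
  ∃ n, Relation.TransGen N.Edge n n

/-- A negotiation is acyclic if its graph has no cycle. -/
def Acyclic (N : Negotiation A ν ρ Q) : Prop := ¬ N.Cyclic

/-- A negotiation is deterministic if every transition value is a singleton
(except at the final atom). -/
def Deterministic (N : Negotiation A ν ρ Q) : Prop :=
  ∀ n ∈ N.atoms, n ≠ N.final → ∀ a ∈ N.parties n, ∀ r ∈ N.outs n, ∃ m, N.trans n a r = {m}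

/-- A loop: a nonempty occurrence sequence from a reachable marking back to itself. -/
def IsLoop (N : Negotiation A ν ρ Q) (σ : List (ν × ρ)) : Prop :=
  σ ≠ [] ∧ ∃ x, N.Reachable x ∧ Occ N x σ x

/-- The set of atoms occurring in an occurrence sequence. -/
def atomsOf [DecidableEq ν] (σ : List (ν × ρ)) : Finset ν := (σ.map Prod.fst).toFinset

/-- A minimal loop: no loop has a set of atoms that is a proper subset of its set of atoms. -/
def IsMinimalLoop [DecidableEq ν] (N : Negotiation A ν ρ Q) (σ : List (ν × ρ)) : Prop :=
  N.IsLoop σ ∧ ∀ σ', N.IsLoop σ' → ¬ atomsOf σ' ⊂ atomsOf σ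

/-- `s` is a synchronizer of the loop `σ`. -/
def Synchronizes [DecidableEq ν] (N : Negotiation A ν ρ Q) (s : ν) (σ : List (ν × ρ)) : Prop :=
  N.IsLoop σ ∧ s ∈ atomsOf σ ∧ ∀ p ∈ σ, N.parties p.1 ⊆ N.parties s

/-- A loop is synchronized if it has a synchronizer. -/
def Synchronized [DecidableEq ν] (N : Negotiation A ν ρ Q) (σ : List (ν × ρ)) : Prop :=
  ∃ s, N.Synchronizes s σ

/-- The set of synchronizers of a negotiation. -/
def Synchronizers [DecidableEq ν] (N : Negotiation A ν ρ Q) : Set ν :=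
  {s | ∃ σ, N.Synchronizes s σ}

/-- The outcome `(n,r)` unconditionally enables the atom `n'`. -/
def UncondEnables (N : Negotiation A ν ρ Q) (n : ν) (r : ρ) (n' : ν) : Prop :=
  N.parties n' ⊆ N.parties n ∧ ∀ a ∈ N.parties n', N.trans n a r = {n'}

/-- The state transformer of an occurrence sequence: the relational composition of the
transformers of its outcomes. -/
def seqDelta (N : Negotiation A ν ρ Q) : List (ν × ρ) → ((∀ a, Q a) → (∀ a, Q a) → Prop)
  | [] => Eq
  | p :: l => Relation.Comp (N.delta p.1 p.2) (N.seqDelta l)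

/-- The summary transformer `⟨N, r⟩` associated with a final outcome `r`. -/
def SummaryT (N : Negotiation A ν ρ Q) (r : ρ) : (∀ a, Q a) → (∀ a, Q a) → Prop :=
  fun q q' => ∃ σ, Occ N N.initM σ N.finalM ∧ σ.getLast? = some (N.final, r) ∧
    N.seqDelta σ q q'

/-- Equivalence of negotiations over the same agents. -/
def Equivalent (N₁ N₂ : Negotiation A ν ρ Q) : Prop :=
  (¬ N₁.Sound ∧ ¬ N₂.Sound) ∨
  (N₁.Sound ∧ N₂.Sound ∧ N₁.outs N₁.final = N₂.outs N₂.final ∧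
    ∀ r ∈ N₁.outs N₁.final, N₁.SummaryT r = N₂.SummaryT r)

/-- Total number of outcomes of all atoms, `|Out(N)|`. -/
def OutCard (N : Negotiation A ν ρ Q) : ℕ := ∑ n ∈ N.atoms, (N.outs n).card

/-- The target of an outcome `(n,r)`: the partial function assigning to each party its set of
next atoms. -/
def target (N : Negotiation A ν ρ Q) (n : ν) (r : ρ) : A → Option (Finset ν) :=
  fun a => if a ∈ N.parties n then some (N.trans n a r) else none

/-- `Ta(N)`: the set of targets of all outcomes of `N`. -/
def Targets (N : Negotiation A ν ρ Q) : Set (A → Option (Finset ν)) :=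
  {f | ∃ n ∈ N.atoms, ∃ r ∈ N.outs n, f = N.target n r}

section Rules

variable [DecidableEq ν] [DecidableEq ρ]

/-- The merge rule applied at atom `n`, merging outcomes `r₁, r₂` into the fresh outcome `rf`. -/
def MergeAt (n : ν) (r₁ r₂ rf : ρ) (N₁ N₂ : Negotiation A ν ρ Q) : Prop :=
  n ∈ N₁.atoms ∧ r₁ ∈ N₁.outs n ∧ r₂ ∈ N₁.outs n ∧ r₁ ≠ r₂ ∧
  (∀ a ∈ N₁.parties n, N₁.trans n a r₁ = N₁.trans n a r₂) ∧
  rf ∉ N₁.outs n ∧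
  N₂.atoms = N₁.atoms ∧ N₂.init = N₁.init ∧ N₂.final = N₁.final ∧
  N₂.parties = N₁.parties ∧
  N₂.outs n = insert rf (((N₁.outs n).erase r₁).erase r₂) ∧
  (∀ m, m ≠ n → N₂.outs m = N₁.outs m) ∧
  (∀ a, N₂.trans n a rf = N₁.trans n a r₁) ∧
  (∀ r ∈ ((N₁.outs n).erase r₁).erase r₂, ∀ a, N₂.trans n a r = N₁.trans n a r) ∧
  (∀ m, m ≠ n → N₂.trans m = N₁.trans m) ∧
  (N₂.delta n rf = fun q q' => N₁.delta n r₁ q q' ∨ N₁.delta n r₂ q q') ∧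
  (∀ r ∈ ((N₁.outs n).erase r₁).erase r₂, N₂.delta n r = N₁.delta n r) ∧
  (∀ m, m ≠ n → N₂.delta m = N₁.delta m)

/-- The condition "`n'` appears in no value of the transition function after steps (1)-(3)
of the shortcut rule applied to `(n, r)` and `n'`". -/
def ShortcutRemCond (N₁ : Negotiation A ν ρ Q) (n n' : ν) (r : ρ) : Prop :=
  (∀ m ∈ N₁.atoms, ∀ a ∈ N₁.parties m, ∀ r'' ∈ N₁.outs m,
      (m = n → r'' ≠ r) → n' ∉ N₁.trans m a r'') ∧
  (∀ a ∈ N₁.parties n, a ∉ N₁.parties n' → n' ∉ N₁.trans n a r) ∧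
  (∀ r' ∈ N₁.outs n', ∀ a ∈ N₁.parties n', n' ∉ N₁.trans n' a r')

/-- The shortcut rule applied at `(n,r)` shortcutting the unconditionally enabled atom `n'`,
with fresh outcome names given by `fr`. -/
def ShortcutAt (n n' : ν) (r : ρ) (fr : ρ → ρ) (N₁ N₂ : Negotiation A ν ρ Q) : Prop :=
  N₁.Deterministic ∧
  n ∈ N₁.atoms ∧ n' ∈ N₁.atoms ∧ n ≠ n' ∧ r ∈ N₁.outs n ∧
  N₁.UncondEnables n r n' ∧
  (∀ r₁ ∈ N₁.outs n', ∀ r₂ ∈ N₁.outs n', fr r₁ = fr r₂ → r₁ = r₂) ∧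
  (∀ r' ∈ N₁.outs n', fr r' ∉ N₁.outs n) ∧
  N₂.init = N₁.init ∧ N₂.final = N₁.final ∧
  N₂.outs n = ((N₁.outs n).erase r) ∪ (N₁.outs n').image fr ∧
  (∀ m ∈ N₂.atoms, m ≠ n → N₂.outs m = N₁.outs m) ∧
  (∀ m ∈ N₂.atoms, N₂.parties m = N₁.parties m) ∧
  (∀ r' ∈ N₁.outs n', ∀ a ∈ N₁.parties n', N₂.trans n a (fr r') = N₁.trans n' a r') ∧
  (∀ r' ∈ N₁.outs n', ∀ a ∈ N₁.parties n, a ∉ N₁.parties n' →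
      N₂.trans n a (fr r') = N₁.trans n a r) ∧
  (∀ r'' ∈ (N₁.outs n).erase r, ∀ a, N₂.trans n a r'' = N₁.trans n a r'') ∧
  (∀ m ∈ N₂.atoms, m ≠ n → N₂.trans m = N₁.trans m) ∧
  (∀ r' ∈ N₁.outs n', N₂.delta n (fr r') = Relation.Comp (N₁.delta n r) (N₁.delta n' r')) ∧
  (∀ r'' ∈ (N₁.outs n).erase r, N₂.delta n r'' = N₁.delta n r'') ∧
  (∀ m ∈ N₂.atoms, m ≠ n → N₂.delta m = N₁.delta m) ∧
  (ShortcutRemCond N₁ n n' r → N₂.atoms = N₁.atoms.erase n') ∧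
  (¬ ShortcutRemCond N₁ n n' r → N₂.atoms = N₁.atoms)

/-- The iteration rule applied at the self-loop outcome `(n, r)`, with fresh outcome names
given by `fr`. -/
def IterAt (n : ν) (r : ρ) (fr : ρ → ρ) (N₁ N₂ : Negotiation A ν ρ Q) : Prop :=
  n ∈ N₁.atoms ∧ r ∈ N₁.outs n ∧
  (∀ a ∈ N₁.parties n, N₁.trans n a r = {n}) ∧
  (∀ r₁ ∈ (N₁.outs n).erase r, ∀ r₂ ∈ (N₁.outs n).erase r, fr r₁ = fr r₂ → r₁ = r₂) ∧
  N₂.atoms = N₁.atoms ∧ N₂.init = N₁.init ∧ N₂.final = N₁.final ∧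
  N₂.parties = N₁.parties ∧
  N₂.outs n = ((N₁.outs n).erase r).image fr ∧
  (∀ m, m ≠ n → N₂.outs m = N₁.outs m) ∧
  (∀ r' ∈ (N₁.outs n).erase r, ∀ a, N₂.trans n a (fr r') = N₁.trans n a r') ∧
  (∀ m, m ≠ n → N₂.trans m = N₁.trans m) ∧
  (∀ r' ∈ (N₁.outs n).erase r,
      N₂.delta n (fr r') =
        Relation.Comp (Relation.ReflTransGen (N₁.delta n r)) (N₁.delta n r')) ∧
  (∀ m, m ≠ n → N₂.delta m = N₁.delta m)

/-- The merge rule as a relation between negotiations. -/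
def MergeRule (N₁ N₂ : Negotiation A ν ρ Q) : Prop :=
  ∃ n r₁ r₂ rf, MergeAt n r₁ r₂ rf N₁ N₂

/-- The shortcut rule as a relation between negotiations. -/
def ShortcutRule (N₁ N₂ : Negotiation A ν ρ Q) : Prop :=
  ∃ n n' r fr, ShortcutAt n n' r fr N₁ N₂

/-- The iteration rule as a relation between negotiations. -/
def IterRule (N₁ N₂ : Negotiation A ν ρ Q) : Prop :=
  ∃ n r fr, IterAt n r fr N₁ N₂

/-- The guard of the merge rule is satisfied somewhere in `N₁`. -/
def MergeApplicable (N₁ : Negotiation A ν ρ Q) : Prop :=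
  ∃ n ∈ N₁.atoms, ∃ r₁ ∈ N₁.outs n, ∃ r₂ ∈ N₁.outs n, r₁ ≠ r₂ ∧
    ∀ a ∈ N₁.parties n, N₁.trans n a r₁ = N₁.trans n a r₂

end Rules

/-- A rule application, identified by its parameters. -/
inductive RuleTag (ν : Type v) (ρ : Type w) where
  | merge (n : ν) (r₁ r₂ rf : ρ)
  | shortcut (n n' : ν) (r : ρ) (fr : ρ → ρ)
  | iter (n : ν) (r : ρ) (fr : ρ → ρ)

/-- Whether a rule tag is a merge rule. -/
def RuleTag.isMerge : RuleTag ν ρ → Prop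
  | .merge _ _ _ _ => True
  | _ => False

/-- Whether a rule tag is a merge or a shortcut rule. -/
def RuleTag.isMergeOrShortcut : RuleTag ν ρ → Prop
  | .iter _ _ _ => False
  | _ => True

section Chains

variable [DecidableEq ν] [DecidableEq ρ]

/-- Applying the rule given by a tag. -/
def ApplyRule : RuleTag ν ρ → Negotiation A ν ρ Q → Negotiation A ν ρ Q → Prop
  | .merge n r₁ r₂ rf => MergeAt n r₁ r₂ rf
  | .shortcut n n' r fr => ShortcutAt n n' r fr
  | .iter n r fr => IterAt n r fr

/-- Applying a finite sequence of rules. -/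
inductive Chain : List (RuleTag ν ρ) → Negotiation A ν ρ Q → Negotiation A ν ρ Q → Prop
  | nil (N : Negotiation A ν ρ Q) : Chain [] N N
  | cons {t : RuleTag ν ρ} {L : List (RuleTag ν ρ)} {N₁ N₂ N₃ : Negotiation A ν ρ Q} :
      ApplyRule t N₁ N₂ → Chain L N₂ N₃ → Chain (t :: L) N₁ N₃

end Chains

section Fragments

variable [DecidableEq ν]

/-- The atoms of the fragment `F_s`: atoms occurring in loops synchronized by `s`. -/
def FragAtoms (N : Negotiation A ν ρ Q) (s : ν) : Set ν :=
  {n | ∃ σ, N.Synchronizes s σ ∧ n ∈ atomsOf σ}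

/-- The outcomes of an atom `n` in the fragment `F_s`. -/
def FragOuts (N : Negotiation A ν ρ Q) (s : ν) (n : ν) : Set ρ :=
  {r | ∃ σ, N.Synchronizes s σ ∧ (n, r) ∈ σ}

/-- An exit of the fragment `F_s`: an outcome of `N` whose atom belongs to `F_s`
but which is not an outcome of `F_s`. -/
def IsExit (N : Negotiation A ν ρ Q) (s : ν) (e : ν) (re : ρ) : Prop :=
  e ∈ N.FragAtoms s ∧ re ∈ N.outs e ∧ re ∉ N.FragOuts s e

/-- Characterization of the `s`-negotiation `N_s`: a negotiation over the agents `P_s`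
whose atoms are those of the fragment `F_s` together with a fresh final atom, whose initial
atom is (the restriction of) `s`, and whose transition function agrees with the one of `F_s`
except that every value equal to `s` is replaced by the fresh final atom. -/
def IsSNeg (N : Negotiation A ν ρ Q) (s : ν)
    (M : Negotiation {a : A // a ∈ N.parties s} ν ρ (fun a => Q a.1)) : Prop :=
  ∃ nf : ν, nf ∉ N.FragAtoms s ∧
    (↑M.atoms : Set ν) = insert nf (N.FragAtoms s) ∧
    M.init = s ∧ M.final = nf ∧
    (∀ n ∈ N.FragAtoms s, ∀ a : {a : A // a ∈ N.parties s},
        (a ∈ M.parties n ↔ a.1 ∈ N.parties n)) ∧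
    (∀ n ∈ N.FragAtoms s, ∀ r : ρ, (r ∈ M.outs n ↔ r ∈ N.FragOuts s n)) ∧
    (∀ n ∈ N.FragAtoms s, ∀ r ∈ M.outs n, ∀ a : {a : A // a ∈ N.parties s},
        (↑(M.trans n a r) : Set ν) = (fun t => if t = s then nf else t) '' ↑(N.trans n a.1 r)) ∧
    (∀ n ∈ N.FragAtoms s, ∀ r ∈ M.outs n, ∀ q q',
        M.delta n r q q' ↔
          ∃ qf qf' : (∀ a, Q a),
            (∀ a : {a : A // a ∈ N.parties s}, qf a.1 = q a) ∧
            (∀ a : {a : A // a ∈ N.parties s}, qf' a.1 = q' a) ∧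
            N.delta n r qf qf')

end Fragments

section Procedure

variable [DecidableEq ν] [DecidableEq ρ]

/-- An execution of the reduction procedure on `N₀`:
`Ni 1` is obtained from `N₀` by exhaustive merging; while `Ni i` is cyclic, an atom `sel i`
whose `s`-negotiation is acyclic is selected, the sequence of merge and shortcut rules that
summarizes this `s`-negotiation (except its last rule) is applied to `Ni i` (giving `Nmid i`),
the iteration rule is applied at `sel i` (giving `Ni' i`), and then the merge rule is applied
exhaustively (giving `Ni (i+1)`); finally, the resulting acyclic negotiation is summarized by
merge and shortcut rules. -/
structure RedExec (N₀ : Negotiation A ν ρ Q) where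
  steps : ℕ
  Ni : ℕ → Negotiation A ν ρ Q
  Nmid : ℕ → Negotiation A ν ρ Q
  Ni' : ℕ → Negotiation A ν ρ Q
  sel : ℕ → ν
  initSeq : List (RuleTag ν ρ)
  segSeq : ℕ → List (RuleTag ν ρ)
  mergeSeq : ℕ → List (RuleTag ν ρ)
  finalSeq : List (RuleTag ν ρ)
  Nfin : Negotiation A ν ρ Q
  h_init : Chain initSeq N₀ (Ni 1)
  h_init_merge : ∀ t ∈ initSeq, t.isMerge
  h_init_irred : ¬ (Ni 1).MergeApplicable
  h_cyc : ∀ i, 1 ≤ i → i ≤ steps → (Ni i).Cyclic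
  h_acyc : ¬ (Ni (steps + 1)).Cyclic
  h_sel_mem : ∀ i, 1 ≤ i → i ≤ steps → sel i ∈ (Ni i).atoms
  h_sel_acyc : ∀ i, 1 ≤ i → i ≤ steps →
    ∀ M : Negotiation {a : A // a ∈ (Ni i).parties (sel i)} ν ρ (fun a => Q a.1),
      (Ni i).IsSNeg (sel i) M → M.Acyclic
  h_seg : ∀ i, 1 ≤ i → i ≤ steps →
    ∃ (M M' : Negotiation {a : A // a ∈ (Ni i).parties (sel i)} ν ρ (fun a => Q a.1))
      (t : RuleTag ν ρ),
      (Ni i).IsSNeg (sel i) M ∧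
      Chain (segSeq i ++ [t]) M M' ∧ M'.atoms.card = 1 ∧
      (∀ u ∈ segSeq i ++ [t], u.isMergeOrShortcut) ∧
      Chain (segSeq i) (Ni i) (Nmid i)
  h_iter : ∀ i, 1 ≤ i → i ≤ steps → ∃ r fr, IterAt (sel i) r fr (Nmid i) (Ni' i)
  h_merge : ∀ i, 1 ≤ i → i ≤ steps →
    Chain (mergeSeq i) (Ni' i) (Ni (i + 1)) ∧ (∀ t ∈ mergeSeq i, t.isMerge) ∧
      ¬ (Ni (i + 1)).MergeApplicable
  h_final : Chain finalSeq (Ni (steps + 1)) Nfin ∧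
    (∀ t ∈ finalSeq, t.isMergeOrShortcut) ∧ Nfin.atoms.card = 1
  h_stable : ∀ i, steps + 1 ≤ i → Ni i = Ni (steps + 1)
  h_stable' : ∀ i, i < 1 ∨ steps < i → Ni' i = Ni i

/-- The total number of rule applications in an execution of the reduction procedure. -/
def RedExec.appl {N₀ : Negotiation A ν ρ Q} (E : RedExec N₀) : ℕ :=
  E.initSeq.length +
    (∑ i ∈ Finset.Icc 1 E.steps, ((E.segSeq i).length + 1 + (E.mergeSeq i).length)) +
    E.finalSeq.length

end Procedure

end Negotiation

open Negotiation

variable {A : Type} {ν : Type} {ρ : Type} {Q : A → Type}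
variable [DecidableEq A] [DecidableEq ν] [DecidableEq ρ]

set_option linter.unusedSectionVars false

namespace SNegAux

open Negotiation

variable {A : Type} {ν : Type} {ρ : Type} {Q : A → Type}
variable [DecidableEq A] [DecidableEq ν] [DecidableEq ρ]
variable {N : Negotiation A ν ρ Q}

theorem occ_append : ∀ {l₁ : List (ν × ρ)} {x y z : A → Finset ν} {l₂ : List (ν × ρ)},
    Occ N x l₁ y → Occ N y l₂ z → Occ N x (l₁ ++ l₂) z := by
  intro l₁
  induction l₁ with
  | nil => intro x y z l₂ h₁ h₂; cases h₁; exact h₂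
  | cons p l ih =>
    intro x y z l₂ h₁ h₂
    cases h₁ with
    | cons st rest => exact Occ.cons st (ih rest h₂)

theorem occ_decomp : ∀ {l₁ : List (ν × ρ)} {x y : A → Finset ν} {p : ν × ρ} {l₂ : List (ν × ρ)},
    Occ N x (l₁ ++ p :: l₂) y →
    ∃ w w', Occ N x l₁ w ∧ N.Step w p.1 p.2 w' ∧ Occ N w' l₂ y := by
  intro l₁
  induction l₁ with
  | nil =>
    intro x y p l₂ h
    cases h with
    | cons st rest => exact ⟨x, _, Occ.nil x, st, rest⟩
  | cons q l ih =>
    intro x y p l₂ h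
    cases h with
    | cons st rest =>
      obtain ⟨w, w', h1, h2, h3⟩ := ih rest
      exact ⟨w, w', Occ.cons st h1, h2, h3⟩

theorem occ_mem_step {x y : A → Finset ν} {l : List (ν × ρ)} {p : ν × ρ}
    (h : Occ N x l y) (hp : p ∈ l) : ∃ w w', N.Step w p.1 p.2 w' := by
  obtain ⟨l₁, l₂, rfl⟩ := List.append_of_mem hp
  obtain ⟨w, w', _, h2, _⟩ := occ_decomp h
  exact ⟨w, w', h2⟩

theorem step_atom_mem {x x' : A → Finset ν} {n : ν} {r : ρ} (h : N.Step x n r x') :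
    n ∈ N.atoms ∧ r ∈ N.outs n := ⟨h.1.1, h.2.1⟩

theorem occ_from_final : ∀ {l : List (ν × ρ)} {y : A → Finset ν},
    Occ N N.finalM l y → l = [] ∧ y = N.finalM := by
  intro l y h
  cases h with
  | nil => exact ⟨rfl, rfl⟩
  | cons st _ =>
    exfalso
    obtain ⟨a, ha⟩ := N.parties_nonempty _ st.1.1
    have := st.1.2 a ha
    simp [Negotiation.finalM] at this

theorem occ_reachable {x y : A → Finset ν} {l : List (ν × ρ)}
    (hx : N.Reachable x) (h : Occ N x l y) : N.Reachable y := by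
  obtain ⟨π, hπ⟩ := hx
  exact ⟨π ++ l, occ_append hπ h⟩

theorem step_reachable {x x' : A → Finset ν} {n : ν} {r : ρ}
    (hx : N.Reachable x) (h : N.Step x n r x') : N.Reachable x' :=
  occ_reachable hx (Occ.cons h (Occ.nil x'))

/-- token-tracking: if agent `a`'s token is `{v}`, then either it stays `{v}` to the end,
or some step of the run is at atom `v` and involves `a`. -/
theorem occ_token : ∀ {δ : List (ν × ρ)} {x w : A → Finset ν}, Occ N x δ w →
    ∀ {a v}, x a = {v} → w a = {v} ∨ ∃ p ∈ δ, p.1 = v ∧ a ∈ N.parties p.1 := by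
  intro δ
  induction δ with
  | nil => intro x w h a v hx; cases h; exact Or.inl hx
  | cons p δ' ih =>
    intro x w h a v hx
    obtain ⟨n, r⟩ := p
    cases h with
    | cons st rest =>
      by_cases hpa : a ∈ N.parties n
      · have hmem : n ∈ x a := st.1.2 a hpa
        rw [hx, Finset.mem_singleton] at hmem
        exact Or.inr ⟨(n, r), List.mem_cons_self, hmem, hpa⟩
      · have hx' := st.2.2 a
        rw [if_neg hpa, hx] at hx'
        rcases ih rest hx' with h1 | ⟨q, hq, h2⟩
        · exact Or.inl h1
        · exact Or.inr ⟨q, List.mem_cons_of_mem _ hq, h2⟩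

theorem atomsOf_mem {l : List (ν × ρ)} {t : ν} :
    t ∈ atomsOf (ρ := ρ) l ↔ ∃ r, (t, r) ∈ l := by
  simp only [Negotiation.atomsOf, List.mem_toFinset, List.mem_map]
  constructor
  · rintro ⟨⟨t', r⟩, hm, rfl⟩; exact ⟨r, hm⟩
  · rintro ⟨r, hm⟩; exact ⟨(t, r), hm, rfl⟩

theorem no_final_in_loop {σ : List (ν × ρ)} (hL : N.IsLoop σ) {n : ν} {r : ρ}
    (hm : (n, r) ∈ σ) : n ≠ N.final := by
  rintro rfl
  obtain ⟨hne, x, hx, hocc⟩ := hL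
  obtain ⟨l₁, l₂, rfl⟩ := List.append_of_mem hm
  obtain ⟨w, w', h1, h2, h3⟩ := occ_decomp hocc
  have hw' : w' = N.finalM := by
    funext a
    have hupd := h2.2.2 a
    rw [if_pos (N.final_all a)] at hupd
    rw [hupd]
    exact (N.trans_empty_iff _ N.final_mem a (N.final_all a) r h2.2.1).2 rfl
  subst hw'
  obtain ⟨rfl, rfl⟩ := occ_from_final h3
  obtain ⟨habs, -⟩ := occ_from_final hocc
  simp at habs

theorem sync_pair_props {s : ν} {σ : List (ν × ρ)} (hsy : N.Synchronizes s σ) {n : ν} {r : ρ}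
    (hm : (n, r) ∈ σ) :
    n ∈ N.atoms ∧ r ∈ N.outs n ∧ n ≠ N.final ∧ N.parties n ⊆ N.parties s ∧
      n ∈ N.FragAtoms s ∧ r ∈ N.FragOuts s n := by
  have hL := hsy.1
  obtain ⟨w, w', hstep⟩ := occ_mem_step hL.2.choose_spec.2 hm
  refine ⟨hstep.1.1, hstep.2.1, no_final_in_loop hL hm, hsy.2.2 (n, r) hm,
    ⟨σ, hsy, atomsOf_mem.2 ⟨r, hm⟩⟩, ⟨σ, hsy, hm⟩⟩

theorem frag_props {s n : ν} (h : n ∈ N.FragAtoms s) :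
    n ∈ N.atoms ∧ n ≠ N.final ∧ N.parties n ⊆ N.parties s ∧ ∃ r, r ∈ N.FragOuts s n := by
  obtain ⟨σ, hsy, hmem⟩ := h
  obtain ⟨r, hm⟩ := atomsOf_mem.1 hmem
  have := sync_pair_props hsy hm
  exact ⟨this.1, this.2.2.1, this.2.2.2.1, r, this.2.2.2.2.2⟩

theorem fout_props {s n : ν} {r : ρ} (h : r ∈ N.FragOuts s n) :
    n ∈ N.atoms ∧ r ∈ N.outs n ∧ n ≠ N.final ∧ N.parties n ⊆ N.parties s ∧
      n ∈ N.FragAtoms s := by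
  obtain ⟨σ, hsy, hm⟩ := h
  have := sync_pair_props hsy hm
  exact ⟨this.1, this.2.1, this.2.2.1, this.2.2.2.1, this.2.2.2.2.1⟩

theorem rotate_at {s : ν} {σ : List (ν × ρ)} (hsy : N.Synchronizes s σ) {p₀ : ν × ρ}
    (hm : p₀ ∈ σ) :
    ∃ (z z' : A → Finset ν) (l : List (ν × ρ)),
      N.Reachable z ∧ N.Step z p₀.1 p₀.2 z' ∧ Occ N z' l z ∧
      N.Synchronizes s (p₀ :: l) ∧ (∀ p, p ∈ σ ↔ p ∈ p₀ :: l) := by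
  obtain ⟨⟨hne, x, hx, hocc⟩, hsm, hsub⟩ := hsy
  obtain ⟨l₁, l₂, rfl⟩ := List.append_of_mem hm
  obtain ⟨z, z', h1, h2, h3⟩ := occ_decomp hocc
  have htr : ∀ p, p ∈ l₁ ++ p₀ :: l₂ ↔ p ∈ p₀ :: (l₂ ++ l₁) := by
    intro p; simp only [List.mem_append, List.mem_cons]; tauto
  have hz : N.Reachable z := occ_reachable hx h1
  have hloop : Occ N z (p₀ :: (l₂ ++ l₁)) z := Occ.cons h2 (occ_append h3 h1)
  refine ⟨z, z', l₂ ++ l₁, hz, h2, occ_append h3 h1, ⟨⟨List.cons_ne_nil _ _, z, hz, hloop⟩, ?_, ?_⟩, htr⟩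
  · obtain ⟨c, hc⟩ := atomsOf_mem.1 hsm
    exact atomsOf_mem.2 ⟨c, (htr _).1 hc⟩
  · intro p hp
    exact hsub p ((htr p).2 hp)

theorem occ_tokens (hD : N.Deterministic) :
    ∀ {δ : List (ν × ρ)} {x y : A → Finset ν}, Occ N x δ y →
      (∀ a, x a = ∅ ∨ ∃ t, x a = {t}) → ∀ a, y a = ∅ ∨ ∃ t, y a = {t} := by
  intro δ
  induction δ with
  | nil => intro x y h hx; cases h; exact hx
  | cons p δ' ih =>
    intro x y h hx
    obtain ⟨n, r⟩ := p
    cases h with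
    | cons st rest =>
      refine ih rest ?_
      intro a
      rw [st.2.2 a]
      by_cases hpa : a ∈ N.parties n
      · rw [if_pos hpa]
        by_cases hfin : n = N.final
        · exact Or.inl ((N.trans_empty_iff n st.1.1 a hpa r st.2.1).2 hfin)
        · exact Or.inr (hD n st.1.1 hfin a hpa r st.2.1)
      · rw [if_neg hpa]; exact hx a

theorem reach_tokens (hD : N.Deterministic) {x : A → Finset ν} (hx : N.Reachable x) :
    ∀ a, x a = ∅ ∨ ∃ t, x a = {t} := by
  obtain ⟨π, hπ⟩ := hx
  exact occ_tokens hD hπ (fun a => Or.inr ⟨N.init, rfl⟩)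

theorem enables_smark (hD : N.Deterministic) {s : ν} {x : A → Finset ν}
    (hx : N.Reachable x) (he : N.Enables x s) : ∀ a ∈ N.parties s, x a = {s} := by
  intro a ha
  rcases reach_tokens hD hx a with h | ⟨t, ht⟩
  · exact absurd (he.2 a ha) (by rw [h]; simp)
  · have := he.2 a ha
    rw [ht, Finset.mem_singleton] at this
    rw [ht, this]

open Classical in
noncomputable def nxt (N : Negotiation A ν ρ Q) (s n : ν) (a : A) (r : ρ) : ν :=
  if h : ∃ m, N.trans n a r = {m} then h.choose else s

theorem nxt_spec (hD : N.Deterministic) {s n : ν} (hn : n ∈ N.atoms) (hnf : n ≠ N.final)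
    {a : A} (ha : a ∈ N.parties n) {r : ρ} (hr : r ∈ N.outs n) :
    N.trans n a r = {nxt N s n a r} := by
  have h : ∃ m, N.trans n a r = {m} := hD n hn hnf a ha r hr
  rw [nxt]
  rw [dif_pos h]
  exact h.choose_spec

theorem nxt_frag (hD : N.Deterministic) {s n : ν} {r : ρ} (hr : r ∈ N.FragOuts s n)
    {a : A} (ha : a ∈ N.parties n) : nxt N s n a r ∈ N.FragAtoms s := by
  obtain ⟨σ, hsy, hm⟩ := hr
  obtain ⟨z, z', l, hz, hstep, hocc, hsy', htr⟩ := rotate_at hsy hm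
  have hprops := sync_pair_props hsy hm
  have htok : z' a = {nxt N s n a r} := by
    have hupd := hstep.2.2 a
    rw [if_pos ha] at hupd
    rw [hupd]
    exact nxt_spec hD hprops.1 hprops.2.2.1 ha hprops.2.1
  rcases occ_token hocc htok with h1 | ⟨p, hp, hpv, hpa⟩
  · have hmem : n ∈ z a := hstep.1.2 a ha
    rw [h1, Finset.mem_singleton] at hmem
    rw [← hmem]
    exact hprops.2.2.2.2.1
  · have hp' : (p.1, p.2) ∈ (n, r) :: l := List.mem_cons_of_mem _ hp
    rw [← hpv]
    exact ⟨(n, r) :: l, hsy', atomsOf_mem.2 ⟨p.2, hp'⟩⟩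

def Desc (N : Negotiation A ν ρ Q) (s : ν) : ℕ → ν → Prop
  | 0, t => t = s
  | (k+1), t => t = s ∨ ∃ r, r ∈ N.FragOuts s t ∧ ∀ a ∈ N.parties t, Desc N s k (nxt N s t a r)

theorem desc_succ {s : ν} {k : ℕ} {t : ν} (h : Desc N s k t) : Desc N s (k + 1) t := by
  induction k generalizing t with
  | zero => exact Or.inl h
  | succ k ih =>
    rcases h with h | ⟨r, hr, hf⟩
    · exact Or.inl h
    · exact Or.inr ⟨r, hr, fun a ha => ih (hf a ha)⟩

theorem desc_mono {s : ν} {k K : ℕ} {t : ν} (h : Desc N s k t) (hk : k ≤ K) :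
    Desc N s K t := by
  induction K with
  | zero => exact (Nat.le_zero.1 hk) ▸ h
  | succ K ih =>
    rcases Nat.lt_or_ge k (K+1) with hlt | hge
    · exact desc_succ (ih (Nat.lt_succ_iff.1 hlt))
    · exact (Nat.le_antisymm hk hge) ▸ h

noncomputable def Drk (N : Negotiation A ν ρ Q) (s t : ν) : ℕ := sInf {k | Desc N s k t}

theorem drk_spec {s t : ν} (h : ∃ k, Desc N s k t) : Desc N s (Drk N s t) t :=
  Nat.sInf_mem h

theorem drk_le {s t : ν} {k : ℕ} (h : Desc N s k t) : Drk N s t ≤ k :=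
  Nat.sInf_le h

/-- Along a suffix of a rotated synchronized loop ending at an s-marking,
all tokens have finite descent rank. -/
theorem ct_lemma (hD : N.Deterministic) {s : ν} {z₀ : A → Finset ν}
    (hz₀ : ∀ a ∈ N.parties s, z₀ a = {s}) :
    ∀ {l : List (ν × ρ)} {z : A → Finset ν}, Occ N z l z₀ →
      (∀ p ∈ l, p.1 ∈ N.FragAtoms s ∧ p.2 ∈ N.FragOuts s p.1) →
      ∀ a ∈ N.parties s, ∀ t, z a = {t} → ∃ k, Desc N s k t := by
  intro l
  induction l with
  | nil =>
    intro z h hp a ha t hz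
    cases h
    have := hz₀ a ha
    rw [hz] at this
    rw [Finset.singleton_inj] at this
    exact ⟨0, this⟩
  | cons p l' ih =>
    intro z h hp a ha t hz
    obtain ⟨m, q⟩ := p
    cases h with
    | cons st rest =>
      have hmem := hp (m, q) (List.mem_cons_self)
      have hl' : ∀ p ∈ l', p.1 ∈ N.FragAtoms s ∧ p.2 ∈ N.FragOuts s p.1 :=
        fun p hp' => hp p (List.mem_cons_of_mem _ hp')
      by_cases hpa : a ∈ N.parties m
      · have htm : t = m := by
          have := st.1.2 a hpa
          rw [hz, Finset.mem_singleton] at this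
          exact this.symm
        subst htm
        by_cases hts : t = s
        · exact ⟨0, hts⟩
        · have hfo := hmem.2
          have hfp := fout_props hfo
          have hnext : ∀ b ∈ N.parties t, ∃ k, Desc N s k (nxt N s t b q) := by
            intro b hb
            refine ih rest hl' b (hfp.2.2.2.1 hb) _ ?_
            have hupd := st.2.2 b
            rw [if_pos hb] at hupd
            rw [hupd]
            exact nxt_spec hD hfp.1 hfp.2.2.1 hb hfp.2.1
          refine ⟨(N.parties t).sup (fun b => Drk N s (nxt N s t b q)) + 1,
            Or.inr ⟨q, hfo, fun b hb => ?_⟩⟩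
          exact desc_mono (drk_spec (hnext b hb)) (Finset.le_sup (f := fun b => Drk N s (nxt N s t b q)) hb)
      · have hupd := st.2.2 a
        rw [if_neg hpa] at hupd
        exact ih rest hl' a ha t (hupd.trans hz)

theorem frag_desc (hD : N.Deterministic) {s t : ν} (ht : t ∈ N.FragAtoms s) :
    ∃ k, Desc N s k t := by
  by_cases hts : t = s
  · exact ⟨0, hts⟩
  obtain ⟨σ, hsy, hmem⟩ := ht
  obtain ⟨c, hc⟩ := atomsOf_mem.1 hsy.2.1
  obtain ⟨z, z', l, hz, hstep, hocc, hsy', htr⟩ := rotate_at hsy hc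
  have hzs : ∀ a ∈ N.parties s, z a = {s} := enables_smark hD hz hstep.1
  obtain ⟨q₁, hq⟩ := atomsOf_mem.1 hmem
  have hq' : (t, q₁) ∈ (s, c) :: l := (htr _).1 hq
  have hql : (t, q₁) ∈ l := by
    rcases List.mem_cons.1 hq' with h | h
    · exact absurd (congrArg Prod.fst h) hts
    · exact h
  have hprops := sync_pair_props hsy' hq'
  obtain ⟨γ₁, γ₂, rfl⟩ := List.append_of_mem hql
  obtain ⟨v, v', h1, h2, h3⟩ := occ_decomp hocc
  obtain ⟨a₀, ha₀⟩ := N.parties_nonempty t hprops.1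
  have ha₀s : a₀ ∈ N.parties s := hprops.2.2.2.1 ha₀
  have hvreach : N.Reachable v :=
    occ_reachable (step_reachable hz hstep) h1
  have htok : v a₀ = {t} := by
    have hmem' : t ∈ v a₀ := h2.1.2 a₀ ha₀
    rcases reach_tokens hD hvreach a₀ with h | ⟨u, hu⟩
    · rw [h] at hmem'; simp at hmem'
    · rw [hu, Finset.mem_singleton] at hmem'
      rw [hu, hmem']
  refine ct_lemma hD hzs (Occ.cons h2 h3) ?_ a₀ ha₀s t htok
  intro p hp
  have hpρ : (p.1, p.2) ∈ (s, c) :: (γ₁ ++ (t, q₁) :: γ₂) := by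
    rcases List.mem_cons.1 hp with h | h
    · rw [h]; exact List.mem_cons_of_mem _ (List.mem_append.2 (Or.inr (List.mem_cons_self)))
    · exact List.mem_cons_of_mem _ (List.mem_append.2 (Or.inr (List.mem_cons_of_mem _ h)))
  have := sync_pair_props hsy' hpρ
  exact ⟨this.2.2.2.2.1, this.2.2.2.2.2⟩

def GoodT (N : Negotiation A ν ρ Q) (s : ν) (x : A → Finset ν) : Prop :=
  ∀ a ∈ N.parties s, ∃ t, t ∈ N.FragAtoms s ∧ x a = {t}

theorem good_step (hD : N.Deterministic) {s : ν} {x x' : A → Finset ν} {n : ν} {r : ρ}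
    (hg : GoodT N s x) (hst : N.Step x n r x') (hfo : r ∈ N.FragOuts s n) :
    GoodT N s x' := by
  intro a ha
  rw [hst.2.2 a]
  by_cases hpa : a ∈ N.parties n
  · rw [if_pos hpa]
    have hfp := fout_props hfo
    exact ⟨nxt N s n a r, nxt_frag hD hfo hpa, nxt_spec hD hfp.1 hfp.2.2.1 hpa hfp.2.1⟩
  · rw [if_neg hpa]; exact hg a ha

theorem exists_enabled_frag (hD : N.Deterministic) {s : ν} (hs : s ∈ N.atoms) :
    ∀ {κ : List (ν × ρ)} {x : A → Finset ν},
    Occ N x κ N.finalM → GoodT N s x →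
    ∃ e, e ∈ N.FragAtoms s ∧ N.Enables x e := by
  intro κ
  induction κ with
  | nil =>
    intro x h hg
    cases h
    obtain ⟨a, ha⟩ := N.parties_nonempty s hs
    obtain ⟨t, _, ht⟩ := hg a ha
    exact absurd ht.symm (Finset.singleton_ne_empty t)
  | cons p κ' ih =>
    intro x h hg
    obtain ⟨m, q⟩ := p
    cases h with
    | cons st rest =>
      by_cases hex : ∃ a ∈ N.parties m, a ∈ N.parties s
      · obtain ⟨a, ham, has⟩ := hex
        obtain ⟨t, htf, hta⟩ := hg a has
        have hmt : m ∈ x a := st.1.2 a ham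
        rw [hta, Finset.mem_singleton] at hmt
        exact ⟨m, by rw [hmt]; exact htf, st.1⟩
      · push_neg at hex
        rename_i x₁
        have hg' : GoodT N s x₁ := by
          intro a ha
          have hupd := st.2.2 a
          rw [if_neg (fun hm => hex a hm ha)] at hupd
          rw [hupd]; exact hg a ha
        obtain ⟨e, hef, hee⟩ := ih rest hg'
        refine ⟨e, hef, hee.1, fun b hb => ?_⟩
        have hbs : b ∈ N.parties s := (frag_props hef).2.2.1 hb
        have hupd := st.2.2 b
        rw [if_neg (fun hm => hex b hm hbs)] at hupd
        rw [← hupd]; exact hee.2 b hb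

open Classical in
noncomputable def tk (s : ν) (F : Finset ν) : ν := if h : ∃ t, F = {t} then h.choose else s

theorem tk_singleton {s t : ν} : tk s ({t} : Finset ν) = t := by
  have h : ∃ u, ({t} : Finset ν) = {u} := ⟨t, rfl⟩
  rw [tk]
  rw [dif_pos h]
  exact (Finset.singleton_inj.1 h.choose_spec).symm

noncomputable def phi (N : Negotiation A ν ρ Q) (s : ν) (x : A → Finset ν) : ℕ :=
  (N.parties s).sum (fun a => Drk N s (tk s (x a)))

theorem crux_step (hD : N.Deterministic) (hS : N.Sound) {s : ν} (hs : s ∈ N.atoms)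
    {x : A → Finset ν} (hx : N.Reachable x) (hg : GoodT N s x)
    (hnm : ¬ ∀ a ∈ N.parties s, x a = {s}) :
    ∃ e r x₁, N.Step x e r x₁ ∧ e ∈ N.FragAtoms s ∧ r ∈ N.FragOuts s e ∧ e ≠ s ∧
      phi N s x₁ < phi N s x := by
  obtain ⟨π, hπ⟩ := hx
  obtain ⟨κ, hκ⟩ := hS.2 π x hπ
  obtain ⟨e, hef, hee⟩ := exists_enabled_frag hD hs hκ hg
  have hens : e ≠ s := by
    rintro rfl
    apply hnm
    intro a ha
    obtain ⟨t, _, ht⟩ := hg a ha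
    have hm := hee.2 a ha
    rw [ht, Finset.mem_singleton] at hm
    rw [ht, hm]
  have hdesc : Desc N s (Drk N s e) e := drk_spec (frag_desc hD hef)
  have hne0 : Drk N s e ≠ 0 := by
    intro h0
    rw [h0] at hdesc
    exact hens hdesc
  obtain ⟨k, hk⟩ := Nat.exists_eq_succ_of_ne_zero hne0
  rw [hk] at hdesc
  rcases hdesc with h | ⟨r, hr, hf⟩
  · exact absurd h hens
  have hfp := fout_props hr
  have hst : N.Step x e r (fun b => if b ∈ N.parties e then N.trans e b r else x b) :=
    ⟨hee, hfp.2.1, fun b => rfl⟩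
  refine ⟨e, r, _, hst, hef, hr, hens, ?_⟩
  have htoke : ∀ a ∈ N.parties e, x a = {e} := by
    intro a ha
    obtain ⟨t, _, ht⟩ := hg a (hfp.2.2.2.1 ha)
    have hm := hee.2 a ha
    rw [ht, Finset.mem_singleton] at hm
    rw [ht, hm]
  have hkey : ∀ a ∈ N.parties e,
      Drk N s (tk s (if a ∈ N.parties e then N.trans e a r else x a)) ≤ k := by
    intro a ha
    rw [if_pos ha, nxt_spec hD hfp.1 hfp.2.2.1 ha hfp.2.1, tk_singleton]
    exact drk_le (hf a ha)
  refine Finset.sum_lt_sum ?_ ?_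
  · intro a ha
    by_cases hae : a ∈ N.parties e
    · show Drk N s (tk s (if a ∈ N.parties e then N.trans e a r else x a)) ≤ _
      refine le_trans (hkey a hae) ?_
      rw [htoke a hae, tk_singleton, hk]
      exact Nat.le_succ k
    · show Drk N s (tk s (if a ∈ N.parties e then N.trans e a r else x a)) ≤ _
      rw [if_neg hae]
  · obtain ⟨a₀, ha₀⟩ := N.parties_nonempty e hfp.1
    refine ⟨a₀, hfp.2.2.2.1 ha₀, ?_⟩
    show Drk N s (tk s (if a₀ ∈ N.parties e then N.trans e a₀ r else x a₀)) < _
    refine lt_of_le_of_lt (hkey a₀ ha₀) ?_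
    rw [htoke a₀ ha₀, tk_singleton, hk]
    exact Nat.lt_succ_self k

theorem crux (hD : N.Deterministic) (hS : N.Sound) {s : ν} (hs : s ∈ N.atoms) :
    ∀ (m : ℕ) (x : A → Finset ν), N.Reachable x → GoodT N s x → phi N s x ≤ m →
    ∃ l x', Occ N x l x' ∧
      (∀ p ∈ l, p.1 ∈ N.FragAtoms s ∧ p.2 ∈ N.FragOuts s p.1 ∧ p.1 ≠ s) ∧
      ∀ a ∈ N.parties s, x' a = {s} := by
  intro m
  induction m with
  | zero =>
    intro x hx hg hφ
    by_cases hnm : ∀ a ∈ N.parties s, x a = {s}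
    · exact ⟨[], x, Occ.nil x, by simp, hnm⟩
    · obtain ⟨e, r, x₁, _, _, _, _, hlt⟩ := crux_step hD hS hs hx hg hnm
      omega
  | succ m ih =>
    intro x hx hg hφ
    by_cases hnm : ∀ a ∈ N.parties s, x a = {s}
    · exact ⟨[], x, Occ.nil x, by simp, hnm⟩
    · obtain ⟨e, r, x₁, hst, hef, hfo, hens, hlt⟩ := crux_step hD hS hs hx hg hnm
      obtain ⟨l, x', hocc, hp, hsm⟩ :=
        ih x₁ (step_reachable hx hst) (good_step hD hg hst hfo) (by omega)
      refine ⟨(e, r) :: l, x', Occ.cons hst hocc, ?_, hsm⟩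
      intro p hp'
      rcases List.mem_cons.1 hp' with h | h
      · rw [h]; exact ⟨hef, hfo, hens⟩
      · exact hp p h

theorem occ_pres {A' : Type} [DecidableEq A'] {Q' : A' → Type} {M' : Negotiation A' ν ρ Q'}
    {C : (A' → Finset ν) → Prop}
    (hC : ∀ y n r y', C y → M'.Step y n r y' → C y') :
    ∀ {l : List (ν × ρ)} {y z : A' → Finset ν}, Occ M' y l z → C y → C z := by
  intro l
  induction l with
  | nil => intro y z h hy; cases h; exact hy
  | cons p l' ih =>
    intro y z h hy
    obtain ⟨n, r⟩ := p
    cases h with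
    | cons st rest => exact ih rest (hC _ _ _ _ hy st)

theorem split_last (s : ν) : ∀ (l : List (ν × ρ)), (∀ p ∈ l, p.1 ≠ s) ∨
    ∃ l₁ c l₂, l = l₁ ++ (s, c) :: l₂ ∧ ∀ p ∈ l₂, p.1 ≠ s := by
  intro l
  induction l using List.reverseRecOn with
  | nil => exact Or.inl (by simp)
  | append_singleton l' p ih =>
    obtain ⟨n, c⟩ := p
    by_cases hns : n = s
    · subst hns
      exact Or.inr ⟨l', c, [], by simp, by simp⟩
    · rcases ih with h | ⟨l₁, c', l₂, rfl, h2⟩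
      · refine Or.inl ?_
        intro p hp
        rcases List.mem_append.1 hp with h' | h'
        · exact h p h'
        · rw [List.mem_singleton.1 h']; exact hns
      · refine Or.inr ⟨l₁, c', l₂ ++ [(n, c)], by simp, ?_⟩
        intro p hp
        rcases List.mem_append.1 hp with h' | h'
        · exact h2 p h'
        · rw [List.mem_singleton.1 h']; exact hns

/-- The correspondence invariant between markings of `N` and markings of `N_s`. -/
def InvM (N : Negotiation A ν ρ Q) (s nf : ν)
    (x : A → Finset ν) (y : {a : A // a ∈ N.parties s} → Finset ν) : Prop :=
  ∀ a : {a : A // a ∈ N.parties s}, ∃ t, t ∈ N.FragAtoms s ∧ x a.1 = {t} ∧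
    y a = {if t = s then nf else t}

section Mside

variable {s : ν} {M : Negotiation {a : A // a ∈ N.parties s} ν ρ (fun a => Q a.1)} {nf : ν}

theorem memM_frag (h2 : (↑M.atoms : Set ν) = insert nf (N.FragAtoms s))
    {n : ν} (hn : n ∈ N.FragAtoms s) : n ∈ M.atoms := by
  rw [← Finset.mem_coe, h2]
  exact Set.mem_insert_of_mem _ hn

theorem memM_nf (h2 : (↑M.atoms : Set ν) = insert nf (N.FragAtoms s)) : nf ∈ M.atoms := by
  rw [← Finset.mem_coe, h2]
  exact Set.mem_insert _ _

theorem memM_cases (h2 : (↑M.atoms : Set ν) = insert nf (N.FragAtoms s))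
    {n : ν} (hn : n ∈ M.atoms) : n = nf ∨ n ∈ N.FragAtoms s := by
  rw [← Finset.mem_coe, h2] at hn
  exact hn

theorem mtrans (hD : N.Deterministic)
    (h6 : ∀ n ∈ N.FragAtoms s, ∀ r : ρ, (r ∈ M.outs n ↔ r ∈ N.FragOuts s n))
    (h7 : ∀ n ∈ N.FragAtoms s, ∀ r ∈ M.outs n, ∀ a : {a : A // a ∈ N.parties s},
        (↑(M.trans n a r) : Set ν) = (fun t => if t = s then nf else t) '' ↑(N.trans n a.1 r))
    {n : ν} (hn : n ∈ N.FragAtoms s) {r : ρ} (hr : r ∈ M.outs n)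
    {a : {a : A // a ∈ N.parties s}} (ha : a.1 ∈ N.parties n) :
    M.trans n a r = {if nxt N s n a.1 r = s then nf else nxt N s n a.1 r} := by
  have hfo : r ∈ N.FragOuts s n := (h6 n hn r).1 hr
  have hfp := fout_props hfo
  have hT := h7 n hn r hr a
  rw [nxt_spec hD hfp.1 hfp.2.2.1 ha hfp.2.1, Finset.coe_singleton,
    Set.image_singleton] at hT
  apply Finset.coe_injective
  rw [hT, Finset.coe_singleton]

theorem lift_run (hD : N.Deterministic)
    (h2 : (↑M.atoms : Set ν) = insert nf (N.FragAtoms s))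
    (h5 : ∀ n ∈ N.FragAtoms s, ∀ a : {a : A // a ∈ N.parties s},
        (a ∈ M.parties n ↔ a.1 ∈ N.parties n))
    (h6 : ∀ n ∈ N.FragAtoms s, ∀ r : ρ, (r ∈ M.outs n ↔ r ∈ N.FragOuts s n))
    (h7 : ∀ n ∈ N.FragAtoms s, ∀ r ∈ M.outs n, ∀ a : {a : A // a ∈ N.parties s},
        (↑(M.trans n a r) : Set ν) = (fun t => if t = s then nf else t) '' ↑(N.trans n a.1 r)) :
    ∀ {δ : List (ν × ρ)} {z w : A → Finset ν}, Occ N z δ w →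
      (∀ p ∈ δ, p.1 ∈ N.FragAtoms s ∧ p.2 ∈ N.FragOuts s p.1 ∧ p.1 ≠ s) →
      ∀ {y}, InvM N s nf z y → ∃ yy, Occ M y δ yy ∧ InvM N s nf w yy := by
  intro δ
  induction δ with
  | nil =>
    intro z w h hp y hinv
    cases h
    exact ⟨y, Occ.nil y, hinv⟩
  | cons p δ' ih =>
    intro z w h hp y hinv
    obtain ⟨m, q⟩ := p
    obtain ⟨hfm, hfo, hms⟩ := hp (m, q) (List.mem_cons_self)
    have hp' := fun p hp' => hp p (List.mem_cons_of_mem _ hp')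
    cases h with
    | cons st rest =>
      rename_i z₁
      have hqM : q ∈ M.outs m := (h6 m hfm q).2 hfo
      have htokm : ∀ a : {a : A // a ∈ N.parties s}, a ∈ M.parties m → y a = {m} := by
        intro a haM
        have haN := (h5 m hfm a).1 haM
        obtain ⟨t, htf, hxt, hyt⟩ := hinv a
        have hmem : m ∈ z a.1 := st.1.2 a.1 haN
        rw [hxt, Finset.mem_singleton] at hmem
        rw [hyt, ← hmem, if_neg hms]
      have hen : M.Enables y m := by
        refine ⟨memM_frag h2 hfm, fun a haM => ?_⟩
        rw [htokm a haM]
        exact Finset.mem_singleton_self _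
      have hstM : M.Step y m q (fun a => if a ∈ M.parties m then M.trans m a q else y a) :=
        ⟨hen, hqM, fun a => rfl⟩
      have hinv₁ : InvM N s nf z₁ (fun a => if a ∈ M.parties m then M.trans m a q else y a) := by
        intro a
        by_cases haM : a ∈ M.parties m
        · have haN := (h5 m hfm a).1 haM
          have hfp := fout_props hfo
          refine ⟨nxt N s m a.1 q, nxt_frag hD hfo haN, ?_, ?_⟩
          · rw [st.2.2 a.1, if_pos haN]
            exact nxt_spec hD hfp.1 hfp.2.2.1 haN hfp.2.1
          · show (if a ∈ M.parties m then M.trans m a q else y a) = _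
            rw [if_pos haM]
            exact mtrans hD h6 h7 hfm hqM haN
        · have haN : a.1 ∉ N.parties m := fun h => haM ((h5 m hfm a).2 h)
          obtain ⟨t, htf, hxt, hyt⟩ := hinv a
          refine ⟨t, htf, ?_, ?_⟩
          · rw [st.2.2 a.1, if_neg haN]; exact hxt
          · show (if a ∈ M.parties m then M.trans m a q else y a) = _
            rw [if_neg haM]; exact hyt
      obtain ⟨yy, hoccM, hinvw⟩ := ih rest hp' hinv₁
      exact ⟨yy, Occ.cons hstM hoccM, hinvw⟩

end Mside

section Mside2

variable {s : ν} {M : Negotiation {a : A // a ∈ N.parties s} ν ρ (fun a => Q a.1)} {nf : ν}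

theorem lift_init (hD : N.Deterministic) (hs : s ∈ N.atoms) (hsf : s ∈ N.FragAtoms s)
    (h2 : (↑M.atoms : Set ν) = insert nf (N.FragAtoms s))
    (h3 : M.init = s)
    (h5 : ∀ n ∈ N.FragAtoms s, ∀ a : {a : A // a ∈ N.parties s},
        (a ∈ M.parties n ↔ a.1 ∈ N.parties n))
    (h6 : ∀ n ∈ N.FragAtoms s, ∀ r : ρ, (r ∈ M.outs n ↔ r ∈ N.FragOuts s n))
    (h7 : ∀ n ∈ N.FragAtoms s, ∀ r ∈ M.outs n, ∀ a : {a : A // a ∈ N.parties s},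
        (↑(M.trans n a r) : Set ν) = (fun t => if t = s then nf else t) '' ↑(N.trans n a.1 r))
    {z₀ z₁ : A → Finset ν} {c : ρ} (hfo : c ∈ N.FragOuts s s)
    (hst : N.Step z₀ s c z₁) :
    ∃ y₁, M.Step M.initM s c y₁ ∧ InvM N s nf z₁ y₁ := by
  have hcM : c ∈ M.outs s := (h6 s hsf c).2 hfo
  have hfp := fout_props hfo
  have henM : M.Enables M.initM s := by
    refine ⟨memM_frag h2 hsf, fun a _ => ?_⟩
    show s ∈ {M.init}
    rw [h3]
    exact Finset.mem_singleton_self _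
  refine ⟨fun a => if a ∈ M.parties s then M.trans s a c else M.initM a,
    ⟨henM, hcM, fun a => rfl⟩, ?_⟩
  intro a
  have haM : a ∈ M.parties s := (h5 s hsf a).2 a.2
  refine ⟨nxt N s s a.1 c, nxt_frag hD hfo a.2, ?_, ?_⟩
  · rw [hst.2.2 a.1, if_pos a.2]
    exact nxt_spec hD hs hfp.2.2.1 a.2 hfp.2.1
  · show (if a ∈ M.parties s then M.trans s a c else M.initM a) = _
    rw [if_pos haM]
    exact mtrans hD h6 h7 hsf hcM a.2

theorem lift_final
    (h2 : (↑M.atoms : Set ν) = insert nf (N.FragAtoms s))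
    (h4 : M.final = nf)
    {w : A → Finset ν} {yy : {a : A // a ∈ N.parties s} → Finset ν}
    (hinv : InvM N s nf w yy) (hsm : ∀ a ∈ N.parties s, w a = {s}) :
    (∀ a, yy a = {nf}) ∧ ∃ r₀, M.Step yy nf r₀ M.finalM := by
  have htok : ∀ a, yy a = {nf} := by
    intro a
    obtain ⟨t, _, hxt, hyt⟩ := hinv a
    have hts : t = s := by
      have h := hsm a.1 a.2
      rw [hxt] at h
      exact Finset.singleton_inj.1 h
    rw [hyt, hts, if_pos rfl]
  have hnfM : nf ∈ M.atoms := memM_nf h2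
  obtain ⟨r₀, hr₀⟩ := M.outs_nonempty nf hnfM
  have hpnf : ∀ a, a ∈ M.parties nf := by
    intro a
    have := M.final_all a
    rwa [h4] at this
  refine ⟨htok, r₀, ⟨hnfM, fun a _ => by
      rw [htok a]; exact Finset.mem_singleton_self _⟩, hr₀, ?_⟩
  intro a
  rw [if_pos (hpnf a)]
  exact ((M.trans_empty_iff nf hnfM a (hpnf a) r₀ hr₀).2 h4.symm).symm

/-- Characterization of reachable markings of the s-negotiation. -/
def CpredM (N : Negotiation A ν ρ Q) (s nf : ν)
    (M : Negotiation {a : A // a ∈ N.parties s} ν ρ (fun a => Q a.1))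
    (y : {a : A // a ∈ N.parties s} → Finset ν) : Prop :=
  y = M.initM ∨ y = M.finalM ∨ ∃ x, N.Reachable x ∧ GoodT N s x ∧ InvM N s nf x y

theorem char_step (hD : N.Deterministic) (hs : s ∈ N.atoms) (hsf : s ∈ N.FragAtoms s)
    (h1 : nf ∉ N.FragAtoms s)
    (h2 : (↑M.atoms : Set ν) = insert nf (N.FragAtoms s))
    (h3 : M.init = s) (h4 : M.final = nf)
    (h5 : ∀ n ∈ N.FragAtoms s, ∀ a : {a : A // a ∈ N.parties s},
        (a ∈ M.parties n ↔ a.1 ∈ N.parties n))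
    (h6 : ∀ n ∈ N.FragAtoms s, ∀ r : ρ, (r ∈ M.outs n ↔ r ∈ N.FragOuts s n))
    (h7 : ∀ n ∈ N.FragAtoms s, ∀ r ∈ M.outs n, ∀ a : {a : A // a ∈ N.parties s},
        (↑(M.trans n a r) : Set ν) = (fun t => if t = s then nf else t) '' ↑(N.trans n a.1 r))
    {u₀ : A → Finset ν} (hu₀r : N.Reachable u₀) (hu₀s : ∀ a ∈ N.parties s, u₀ a = {s}) :
    ∀ (y : {a : A // a ∈ N.parties s} → Finset ν) (n : ν) (r : ρ) y',
      CpredM N s nf M y → M.Step y n r y' → CpredM N s nf M y' := by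
  have hnfs : nf ≠ s := fun h => h1 (h ▸ hsf)
  intro y n r y' hC hstM
  rcases hC with rfl | rfl | ⟨x, hre, hgo, hinv⟩
  · -- from the initial marking: the step must be at s
    obtain ⟨a₁, ha₁⟩ := M.parties_nonempty n hstM.1.1
    have hn : n ∈ M.initM a₁ := hstM.1.2 a₁ ha₁
    have hns : n = s := by
      have : n ∈ ({M.init} : Finset ν) := hn
      rw [Finset.mem_singleton] at this
      rw [this, h3]
    rw [hns] at hstM
    have hfo : r ∈ N.FragOuts s s := (h6 s hsf r).1 hstM.2.1
    have hfp := fout_props hfo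
    have hen : N.Enables u₀ s := ⟨hs, fun b hb => by
      rw [hu₀s b hb]; exact Finset.mem_singleton_self _⟩
    have hstN : N.Step u₀ s r (fun b => if b ∈ N.parties s then N.trans s b r else u₀ b) :=
      ⟨hen, hfp.2.1, fun b => rfl⟩
    have hgu : GoodT N s u₀ := fun a ha => ⟨s, hsf, hu₀s a ha⟩
    refine Or.inr (Or.inr ⟨_, step_reachable hu₀r hstN, good_step hD hgu hstN hfo, ?_⟩)
    intro a
    have haM : a ∈ M.parties s := (h5 s hsf a).2 a.2
    refine ⟨nxt N s s a.1 r, nxt_frag hD hfo a.2, ?_, ?_⟩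
    · show (if a.1 ∈ N.parties s then N.trans s a.1 r else u₀ a.1) = _
      rw [if_pos a.2]
      exact nxt_spec hD hs hfp.2.2.1 a.2 hfp.2.1
    · rw [hstM.2.2 a, if_pos haM]
      exact mtrans hD h6 h7 hsf hstM.2.1 a.2
  · -- from the final marking: impossible
    obtain ⟨a₁, ha₁⟩ := M.parties_nonempty n hstM.1.1
    have hn : n ∈ M.finalM a₁ := hstM.1.2 a₁ ha₁
    exact absurd hn (by simp [Negotiation.finalM])
  · -- from a corresponding marking
    rcases memM_cases h2 hstM.1.1 with rfl | hfm
    · -- step at the fresh final atom: go to the final marking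
      refine Or.inr (Or.inl ?_)
      funext a
      have hpnf : a ∈ M.parties n := by
        have := M.final_all a
        rwa [h4] at this
      rw [hstM.2.2 a, if_pos hpnf]
      exact (M.trans_empty_iff n hstM.1.1 a hpnf r hstM.2.1).2 h4.symm
    · -- step at a fragment atom
      have hnnf : n ≠ nf := fun h => h1 (h ▸ hfm)
      have hfp := frag_props hfm
      have htokn : ∀ a : {a : A // a ∈ N.parties s}, a ∈ M.parties n →
          (x a.1 = {n} ∧ n ≠ s) := by
        intro a haM
        obtain ⟨t, htf, hxt, hyt⟩ := hinv a
        have hmem : n ∈ y a := hstM.1.2 a haM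
        rw [hyt, Finset.mem_singleton] at hmem
        by_cases hts : t = s
        · rw [if_pos hts] at hmem
          exact absurd hmem hnnf
        · rw [if_neg hts] at hmem
          subst hmem
          rw [hxt]
          exact ⟨rfl, hts⟩
      obtain ⟨a₁, ha₁⟩ := N.parties_nonempty n hfp.1
      have ha₁s : a₁ ∈ N.parties s := hfp.2.2.1 ha₁
      have ha₁M : (⟨a₁, ha₁s⟩ : {a : A // a ∈ N.parties s}) ∈ M.parties n :=
        (h5 n hfm _).2 ha₁
      have hns : n ≠ s := (htokn _ ha₁M).2
      have hfo : r ∈ N.FragOuts s n := (h6 n hfm r).1 hstM.2.1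
      have hen : N.Enables x n := by
        refine ⟨hfp.1, fun b hb => ?_⟩
        have hbs : b ∈ N.parties s := hfp.2.2.1 hb
        have hbM : (⟨b, hbs⟩ : {a : A // a ∈ N.parties s}) ∈ M.parties n :=
          (h5 n hfm _).2 hb
        rw [(htokn _ hbM).1]
        exact Finset.mem_singleton_self _
      have hstN : N.Step x n r (fun b => if b ∈ N.parties n then N.trans n b r else x b) :=
        ⟨hen, (fout_props hfo).2.1, fun b => rfl⟩
      refine Or.inr (Or.inr ⟨_, step_reachable hre hstN, good_step hD hgo hstN hfo, ?_⟩)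
      intro a
      by_cases haM : a ∈ M.parties n
      · have haN := (h5 n hfm a).1 haM
        have hfp' := fout_props hfo
        refine ⟨nxt N s n a.1 r, nxt_frag hD hfo haN, ?_, ?_⟩
        · show (if a.1 ∈ N.parties n then N.trans n a.1 r else x a.1) = _
          rw [if_pos haN]
          exact nxt_spec hD hfp'.1 hfp'.2.2.1 haN hfp'.2.1
        · rw [hstM.2.2 a, if_pos haM]
          exact mtrans hD h6 h7 hfm hstM.2.1 haN
      · have haN : a.1 ∉ N.parties n := fun h => haM ((h5 n hfm a).2 h)
        obtain ⟨t, htf, hxt, hyt⟩ := hinv a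
        refine ⟨t, htf, ?_, ?_⟩
        · show (if a.1 ∈ N.parties n then N.trans n a.1 r else x a.1) = _
          rw [if_neg haN]
          exact hxt
        · rw [hstM.2.2 a, if_neg haM]
          exact hyt

end Mside2

end SNegAux

open SNegAux

/-- If `s` synchronizes at least one loop of the SDN `N`, then the
`s`-negotiation `N_s` is a sound deterministic negotiation. -/
theorem sNeg_sound_deterministic (N : Negotiation A ν ρ Q)
    (hS : N.Sound) (hD : N.Deterministic) (s : ν) (hs : s ∈ N.atoms)
    (hsync : ∃ σ : List (ν × ρ), N.Synchronizes s σ) :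
    ∀ M : Negotiation {a : A // a ∈ N.parties s} ν ρ (fun a => Q a.1),
      N.IsSNeg s M → M.Sound ∧ M.Deterministic := by
  intro M hM
  obtain ⟨nf, h1, h2, h3, h4, h5, h6, h7, h8⟩ := hM
  obtain ⟨σ₀, hsy₀⟩ := hsync
  have hsf : s ∈ N.FragAtoms s := ⟨σ₀, hsy₀, hsy₀.2.1⟩
  -- a reachable s-marking u₀
  obtain ⟨c₀', hc₀'⟩ := atomsOf_mem.1 hsy₀.2.1
  obtain ⟨u₀, u₁, l₀, hu₀r, hu₀step, -, -, -⟩ := rotate_at hsy₀ hc₀'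
  have hu₀s : ∀ a ∈ N.parties s, u₀ a = {s} := enables_smark hD hu₀r hu₀step.1
  -- determinism of M
  have hDet : M.Deterministic := by
    intro n hn hne a ha r hr
    rcases memM_cases h2 hn with rfl | hfm
    · exact absurd h4.symm hne
    · exact ⟨_, mtrans hD h6 h7 hfm hr ((h5 n hfm a).1 ha)⟩
  -- characterization of M-reachable markings
  have hchar : ∀ σ y, Occ M M.initM σ y → CpredM N s nf M y := fun σ y h =>
    occ_pres (char_step hD hs hsf h1 h2 h3 h4 h5 h6 h7 hu₀r hu₀s) h (Or.inl rfl)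
  -- extension to the final marking from any corresponding marking
  have hext : ∀ (x : A → Finset ν) y, N.Reachable x → GoodT N s x → InvM N s nf x y →
      ∃ τ, Occ M y τ M.finalM := by
    intro x y hre hgo hinv
    obtain ⟨l, x', hocc, hp, hsm⟩ := crux hD hS hs (phi N s x) x hre hgo le_rfl
    obtain ⟨yy, hoccM, hinv'⟩ := lift_run hD h2 h5 h6 h7 hocc hp hinv
    obtain ⟨-, r₀, hstf⟩ := lift_final h2 h4 hinv' hsm
    exact ⟨l ++ [(nf, r₀)], occ_append hoccM (Occ.cons hstf (Occ.nil _))⟩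
  -- a canonical first step of M and its N-counterpart
  obtain ⟨c₀, hc₀⟩ := (frag_props hsf).2.2.2
  have hgu : GoodT N s u₀ := fun a ha => ⟨s, hsf, hu₀s a ha⟩
  have henu : N.Enables u₀ s := ⟨hs, fun b hb => by
    rw [hu₀s b hb]; exact Finset.mem_singleton_self _⟩
  have hstN₀ : N.Step u₀ s c₀ (fun b => if b ∈ N.parties s then N.trans s b c₀ else u₀ b) :=
    ⟨henu, (fout_props hc₀).2.1, fun b => rfl⟩
  obtain ⟨y₁, hstM₀, hinv₁⟩ := lift_init hD hs hsf h2 h3 h5 h6 h7 hc₀ hstN₀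
  have hre₁ : N.Reachable _ := step_reachable hu₀r hstN₀
  have hgo₁ : GoodT N s _ := good_step hD hgu hstN₀ hc₀
  refine ⟨⟨?_, ?_⟩, hDet⟩
  · -- every atom of M is enabled at some reachable marking
    intro n hn
    rcases memM_cases h2 hn with rfl | hfm
    · -- the fresh final atom
      obtain ⟨l, x', hocc, hp, hsm⟩ := crux hD hS hs (phi N s _) _ hre₁ hgo₁ le_rfl
      obtain ⟨yy, hoccM, hinv'⟩ := lift_run hD h2 h5 h6 h7 hocc hp hinv₁
      obtain ⟨htok, -⟩ := lift_final h2 h4 hinv' hsm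
      refine ⟨yy, ⟨(s, c₀) :: l, Occ.cons hstM₀ hoccM⟩, hn, fun a _ => ?_⟩
      rw [htok a]
      exact Finset.mem_singleton_self _
    · by_cases hns : n = s
      · subst hns
        refine ⟨M.initM, ⟨[], Occ.nil _⟩, hn, fun a _ => ?_⟩
        show n ∈ {M.init}
        rw [h3]
        exact Finset.mem_singleton_self _
      · -- a fragment atom other than s: walk along a synchronized loop
        obtain ⟨σ₁, hsy₁, hmem₁⟩ := id hfm
        obtain ⟨q₁, hq₁⟩ := atomsOf_mem.1 hmem₁
        obtain ⟨c₁, hc₁⟩ := atomsOf_mem.1 hsy₁.2.1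
        obtain ⟨z, z', l, hzr, hstep, hocc, hsy', htr⟩ := rotate_at hsy₁ hc₁
        have hzs := enables_smark hD hzr hstep.1
        have hq' : (n, q₁) ∈ (s, c₁) :: l := (htr _).1 hq₁
        have hql : (n, q₁) ∈ l := by
          rcases List.mem_cons.1 hq' with h | h
          · exact absurd (congrArg Prod.fst h) hns
          · exact h
        obtain ⟨γ₁, γ₂, rfl⟩ := List.append_of_mem hql
        obtain ⟨w, w', hw1, hw2, hw3⟩ := occ_decomp hocc
        have hpropsρ : ∀ p ∈ (s, c₁) :: (γ₁ ++ (n, q₁) :: γ₂),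
            p.1 ∈ N.FragAtoms s ∧ p.2 ∈ N.FragOuts s p.1 := by
          intro p hp
          have hpρ : (p.1, p.2) ∈ (s, c₁) :: (γ₁ ++ (n, q₁) :: γ₂) := hp
          have := sync_pair_props hsy' hpρ
          exact ⟨this.2.2.2.2.1, this.2.2.2.2.2⟩
        -- from an Inv-marking over w, n is enabled in M
        have hfinish : ∀ yy, InvM N s nf w yy → M.Enables yy n := by
          intro yy hinvw
          refine ⟨hn, fun a haM => ?_⟩
          have haN := (h5 n hfm a).1 haM
          obtain ⟨t, htf, hxt, hyt⟩ := hinvw a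
          have hmem : n ∈ w a.1 := hw2.1.2 a.1 haN
          rw [hxt, Finset.mem_singleton] at hmem
          rw [hyt, ← hmem, if_neg hns]
          exact Finset.mem_singleton_self _
        rcases split_last s γ₁ with hfree | ⟨l₁, c₂, l₂, rfl, hfree⟩
        · -- γ₁ contains no s-step
          have hfo₁ : c₁ ∈ N.FragOuts s s :=
            (hpropsρ (s, c₁) (List.mem_cons_self)).2
          obtain ⟨y₁', hstM₁, hinv₁'⟩ := lift_init hD hs hsf h2 h3 h5 h6 h7 hfo₁ hstep
          have hpγ : ∀ p ∈ γ₁, p.1 ∈ N.FragAtoms s ∧ p.2 ∈ N.FragOuts s p.1 ∧ p.1 ≠ s := by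
            intro p hp
            have := hpropsρ p (List.mem_cons_of_mem _ (List.mem_append.2 (Or.inl hp)))
            exact ⟨this.1, this.2, hfree p hp⟩
          obtain ⟨yy, hoccM, hinvw⟩ := lift_run hD h2 h5 h6 h7 hw1 hpγ hinv₁'
          exact ⟨yy, ⟨(s, c₁) :: γ₁, Occ.cons hstM₁ hoccM⟩, hfinish yy hinvw⟩
        · -- split γ₁ at its last s-step
          obtain ⟨v, v', hv1, hv2, hv3⟩ := occ_decomp hw1
          have hvr : N.Reachable v :=
            occ_reachable (step_reachable hzr hstep) hv1
          have hvs : ∀ a ∈ N.parties s, v a = {s} := enables_smark hD hvr hv2.1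
          have hmemc₂ : ((s, c₂) : ν × ρ) ∈ (s, c₁) :: ((l₁ ++ (s, c₂) :: l₂) ++ (n, q₁) :: γ₂) :=
            List.mem_cons_of_mem _ (List.mem_append.2 (Or.inl
              (List.mem_append.2 (Or.inr (List.mem_cons_self)))))
          have hfo₂ : c₂ ∈ N.FragOuts s s := (hpropsρ _ hmemc₂).2
          obtain ⟨y₁', hstM₁, hinv₁'⟩ := lift_init hD hs hsf h2 h3 h5 h6 h7 hfo₂ hv2
          have hpl₂ : ∀ p ∈ l₂, p.1 ∈ N.FragAtoms s ∧ p.2 ∈ N.FragOuts s p.1 ∧ p.1 ≠ s := by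
            intro p hp
            have hpm := hpropsρ p (List.mem_cons_of_mem _ (List.mem_append.2 (Or.inl
              (List.mem_append.2 (Or.inr (List.mem_cons_of_mem _ hp))))))
            exact ⟨hpm.1, hpm.2, hfree p hp⟩
          obtain ⟨yy, hoccM, hinvw⟩ := lift_run hD h2 h5 h6 h7 hv3 hpl₂ hinv₁'
          exact ⟨yy, ⟨(s, c₂) :: l₂, Occ.cons hstM₁ hoccM⟩, hfinish yy hinvw⟩
  · -- every initial occurrence sequence extends to a large step
    intro σ y hoccI
    rcases hchar σ y hoccI with rfl | rfl | ⟨x, hre, hgo, hinv⟩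
    · obtain ⟨τ, hτ⟩ := hext _ y₁ hre₁ hgo₁ hinv₁
      exact ⟨(s, c₀) :: τ, Occ.cons hstM₀ hτ⟩
    · exact ⟨[], Occ.nil _⟩
    · exact hext x y hre hgo hinv
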